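/- Define a projection P ∈ ℝ^{m×m} (P² = P = Pᵀ) to be left SF(ε,k) for A if ‖(I−P)A‖₂² ≤ (ε/k)‖A − A_k‖_F², and Q ∈ ℝ^{n×n} to be right SF(ε,k) for A if ‖A(I−Q)‖₂² ≤ (ε/k)‖A − A_k‖_F². If P is left SF(ε,k) and Q is right SF(ε,k) for A, then ‖A − P A_k Q‖_F² ≤ (1+4ε)‖A − A_k‖_F². -/

import Mathlib

open Matrix BigOperators

/-- Frobenius norm of a real matrix. -/
noncomputable def frob {m n : ℕ} (A : Matrix (Fin m) (Fin n) ℝ) : ℝ :=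
  Real.sqrt (∑ i, ∑ j, (A i j) ^ 2)

/-- Spectral (operator ℓ2→ℓ2) norm of a real matrix. -/
noncomputable def spec {m n : ℕ} (A : Matrix (Fin m) (Fin n) ℝ) : ℝ :=
  ‖LinearMap.toContinuousLinearMap (Matrix.toEuclideanLin A)‖

/-- `B` is the Moore–Penrose pseudoinverse of `A` (four Penrose conditions). -/
def IsMPInv {m n : ℕ} (A : Matrix (Fin m) (Fin n) ℝ) (B : Matrix (Fin n) (Fin m) ℝ) : Prop :=
  A * B * A = A ∧ B * A * B = B ∧ (A * B)ᵀ = A * B ∧ (B * A)ᵀ = B * A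


noncomputable def vnorm {a : ℕ} (x : Fin a → ℝ) : ℝ := Real.sqrt (∑ i, x i ^ 2)

lemma vnorm_nonneg {a : ℕ} (x : Fin a → ℝ) : 0 ≤ vnorm x := Real.sqrt_nonneg _

lemma vnorm_sq {a : ℕ} (x : Fin a → ℝ) : vnorm x ^ 2 = ∑ i, x i ^ 2 := by
  rw [vnorm, Real.sq_sqrt]; positivity

lemma spec_nonneg {a b : ℕ} (M : Matrix (Fin a) (Fin b) ℝ) : 0 ≤ spec M := norm_nonneg _

lemma euc_norm_eq {a : ℕ} (v : Fin a → ℝ) :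
    ‖(WithLp.equiv 2 (Fin a → ℝ)).symm v‖ = vnorm v := by
  rw [EuclideanSpace.norm_eq, vnorm]
  congr 1; apply Finset.sum_congr rfl; intro i _
  rw [show ((WithLp.equiv 2 (Fin a → ℝ)).symm v).ofLp i = v i from rfl, Real.norm_eq_abs, sq_abs]

lemma spec_mulVec_le {a b : ℕ} (M : Matrix (Fin a) (Fin b) ℝ) (x : Fin b → ℝ) :
    vnorm (M *ᵥ x) ≤ spec M * vnorm x := by
  have h := (LinearMap.toContinuousLinearMap (Matrix.toEuclideanLin M)).le_opNorm
      ((WithLp.equiv 2 (Fin b → ℝ)).symm x)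
  rw [LinearMap.coe_toContinuousLinearMap'] at h
  rw [show toEuclideanLin M ((WithLp.equiv 2 (Fin b → ℝ)).symm x) =
      (WithLp.equiv 2 (Fin a → ℝ)).symm (M *ᵥ x) from rfl, euc_norm_eq, euc_norm_eq] at h
  exact h

noncomputable def ip {m n : ℕ} (M N : Matrix (Fin m) (Fin n) ℝ) : ℝ :=
  ∑ i, ∑ j, M i j * N i j

lemma ip_comm {m n : ℕ} (M N : Matrix (Fin m) (Fin n) ℝ) : ip M N = ip N M := by
  simp only [ip]; congr 1; funext i; congr 1; funext j; ring

lemma ip_nonneg {m n : ℕ} (M : Matrix (Fin m) (Fin n) ℝ) : 0 ≤ ip M M := by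
  apply Finset.sum_nonneg; intro i _; apply Finset.sum_nonneg; intro j _; exact mul_self_nonneg _

lemma ip_zero_left {m n : ℕ} (N : Matrix (Fin m) (Fin n) ℝ) : ip 0 N = 0 := by
  simp [ip]

lemma ip_zero_right {m n : ℕ} (N : Matrix (Fin m) (Fin n) ℝ) : ip N 0 = 0 := by
  simp [ip]

lemma ip_sub_left {m n : ℕ} (M N L : Matrix (Fin m) (Fin n) ℝ) :
    ip (M - N) L = ip M L - ip N L := by
  simp [ip, Matrix.sub_apply, sub_mul, Finset.sum_sub_distrib]

lemma ip_sub_right {m n : ℕ} (M N L : Matrix (Fin m) (Fin n) ℝ) :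
    ip L (M - N) = ip L M - ip L N := by
  simp [ip, Matrix.sub_apply, mul_sub, Finset.sum_sub_distrib]

lemma ip_add_left {m n : ℕ} (M N L : Matrix (Fin m) (Fin n) ℝ) :
    ip (M + N) L = ip M L + ip N L := by
  simp [ip, Matrix.add_apply, add_mul, Finset.sum_add_distrib]

lemma ip_add_right {m n : ℕ} (M N L : Matrix (Fin m) (Fin n) ℝ) :
    ip L (M + N) = ip L M + ip L N := by
  simp [ip, Matrix.add_apply, mul_add, Finset.sum_add_distrib]

lemma ip_eq_trace {m n : ℕ} (M N : Matrix (Fin m) (Fin n) ℝ) :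
    ip M N = Matrix.trace (Mᵀ * N) := by
  simp only [ip, Matrix.trace, Matrix.diag, Matrix.mul_apply, Matrix.transpose_apply]
  rw [Finset.sum_comm]

lemma ipL {a m n : ℕ} (L : Matrix (Fin a) (Fin m) ℝ) (M : Matrix (Fin m) (Fin n) ℝ)
    (N : Matrix (Fin a) (Fin n) ℝ) : ip (L * M) N = ip M (Lᵀ * N) := by
  rw [ip_eq_trace, ip_eq_trace, Matrix.transpose_mul, Matrix.mul_assoc]

lemma ipR {a m n : ℕ} (M : Matrix (Fin m) (Fin a) ℝ) (R : Matrix (Fin a) (Fin n) ℝ)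
    (N : Matrix (Fin m) (Fin n) ℝ) : ip (M * R) N = ip M (N * Rᵀ) := by
  rw [ip_eq_trace, ip_eq_trace, Matrix.transpose_mul, Matrix.mul_assoc,
    Matrix.trace_mul_comm Rᵀ (Mᵀ * N), Matrix.mul_assoc]

lemma ipL' {a m n : ℕ} (L : Matrix (Fin m) (Fin a) ℝ) (M : Matrix (Fin m) (Fin n) ℝ)
    (N : Matrix (Fin a) (Fin n) ℝ) : ip M (L * N) = ip (Lᵀ * M) N := by
  rw [ip_comm, ipL, ip_comm]

lemma ipR' {a m n : ℕ} (M : Matrix (Fin m) (Fin n) ℝ) (N : Matrix (Fin m) (Fin a) ℝ)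
    (R : Matrix (Fin a) (Fin n) ℝ) : ip M (N * R) = ip (M * Rᵀ) N := by
  rw [ip_comm, ipR, ip_comm]

lemma ip_transpose {m n : ℕ} (M N : Matrix (Fin m) (Fin n) ℝ) : ip Mᵀ Nᵀ = ip M N := by
  simp only [ip, Matrix.transpose_apply]; rw [Finset.sum_comm]

lemma ip_cauchy {m n : ℕ} (M N : Matrix (Fin m) (Fin n) ℝ) :
    ip M N ≤ Real.sqrt (ip M M) * Real.sqrt (ip N N) := by
  have h : ∀ (X Y : Matrix (Fin m) (Fin n) ℝ), ip X Y = ∑ p : Fin m × Fin n, X p.1 p.2 * Y p.1 p.2 := by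
    intro X Y; rw [ip]; exact (Fintype.sum_prod_type (f := fun p => X p.1 p.2 * Y p.1 p.2)).symm
  rw [h, h, h]
  have := Real.sum_mul_le_sqrt_mul_sqrt Finset.univ (fun p : Fin m × Fin n => M p.1 p.2)
      (fun p : Fin m × Fin n => N p.1 p.2)
  simpa [pow_two] using this

lemma ip_expand {m n : ℕ} (M N : Matrix (Fin m) (Fin n) ℝ) :
    ip (M + N) (M + N) = ip M M + 2 * ip M N + ip N N := by
  rw [ip_add_left, ip_add_right, ip_add_right, ip_comm N M]; ring

lemma sqrt_self_helper {s c : ℝ} (hs : 0 ≤ s) (hc : 0 ≤ c) (h : s ≤ Real.sqrt s * c) :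
    Real.sqrt s ≤ c := by
  nlinarith [Real.sq_sqrt hs, Real.sqrt_nonneg s, sq_nonneg (Real.sqrt s - c)]

lemma dot_le {a : ℕ} (x y : Fin a → ℝ) : x ⬝ᵥ y ≤ vnorm x * vnorm y := by
  rw [dotProduct, vnorm, vnorm]
  exact Real.sum_mul_le_sqrt_mul_sqrt Finset.univ x y

lemma sum_sq_eq_dot {a : ℕ} (x : Fin a → ℝ) : ∑ i, x i ^ 2 = x ⬝ᵥ x := by
  simp [dotProduct, pow_two]

lemma vnorm_le_of_sq_le {a : ℕ} {x : Fin a → ℝ} {c : ℝ} (hc : 0 ≤ c)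
    (h : vnorm x ^ 2 ≤ vnorm x * c) : vnorm x ≤ c := by
  have := sqrt_self_helper (s := vnorm x ^ 2) (c := c) (sq_nonneg _) hc
    (by rwa [Real.sqrt_sq (vnorm_nonneg x)])
  rwa [Real.sqrt_sq (vnorm_nonneg x)] at this

lemma spec_transpose_mulVec_le {a b : ℕ} (M : Matrix (Fin a) (Fin b) ℝ) (y : Fin a → ℝ) :
    vnorm (Mᵀ *ᵥ y) ≤ spec M * vnorm y := by
  have h1 : y ⬝ᵥ (M *ᵥ (Mᵀ *ᵥ y)) = (Mᵀ *ᵥ y) ⬝ᵥ (Mᵀ *ᵥ y) := by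
    rw [Matrix.dotProduct_mulVec y M, ← Matrix.mulVec_transpose]
  apply vnorm_le_of_sq_le (mul_nonneg (spec_nonneg M) (vnorm_nonneg y))
  rw [vnorm_sq, sum_sq_eq_dot, ← h1]
  calc y ⬝ᵥ (M *ᵥ (Mᵀ *ᵥ y)) ≤ vnorm y * vnorm (M *ᵥ (Mᵀ *ᵥ y)) := dot_le _ _
    _ ≤ vnorm y * (spec M * vnorm (Mᵀ *ᵥ y)) := by
        have := spec_mulVec_le M (Mᵀ *ᵥ y)
        nlinarith [vnorm_nonneg y]
    _ = vnorm (Mᵀ *ᵥ y) * (spec M * vnorm y) := by ring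

lemma proj_mulVec_le {a : ℕ} (P : Matrix (Fin a) (Fin a) ℝ) (hP1 : P * P = P) (hP2 : Pᵀ = P)
    (u : Fin a → ℝ) : vnorm (P *ᵥ u) ≤ vnorm u := by
  have h1 : (P *ᵥ u) ⬝ᵥ (P *ᵥ u) = (P *ᵥ u) ⬝ᵥ u := by
    rw [Matrix.dotProduct_mulVec, ← Matrix.mulVec_transpose, Matrix.mulVec_mulVec, hP2, hP1]
  apply vnorm_le_of_sq_le (vnorm_nonneg u)
  rw [vnorm_sq, sum_sq_eq_dot, h1]
  exact dot_le _ _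

lemma colbound {a b r : ℕ} (M : Matrix (Fin a) (Fin b) ℝ) (V : Matrix (Fin b) (Fin r) ℝ) (c : ℝ)
    (hc : 0 ≤ c) (hM : ∀ x, vnorm (M *ᵥ x) ≤ c * vnorm x)
    (hV : ∀ j, ∑ i, (V i j) ^ 2 ≤ 1) : ip (M * V) (M * V) ≤ (r : ℝ) * c ^ 2 := by
  have hcol : ∀ j, ∑ i, ((M * V) i j) ^ 2 ≤ c ^ 2 := by
    intro j
    have h1 : vnorm (M *ᵥ fun l => V l j) ≤ c * vnorm (fun l => V l j) := hM _
    have h2 : vnorm (fun l => V l j) ^ 2 ≤ 1 := by rw [vnorm_sq]; exact hV j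
    have h3 : (∑ i, ((M * V) i j) ^ 2) = vnorm (M *ᵥ fun l => V l j) ^ 2 := by
      rw [vnorm_sq]
      exact Finset.sum_congr rfl (fun i _ => by
        simp [Matrix.mul_apply, Matrix.mulVec, dotProduct])
    rw [h3]
    nlinarith [vnorm_nonneg (M *ᵥ fun l => V l j), vnorm_nonneg (fun l => V l j)]
  have hswap : ip (M * V) (M * V) = ∑ j, ∑ i, ((M * V) i j) ^ 2 := by
    simp only [ip, pow_two]; rw [Finset.sum_comm]
  rw [hswap]
  calc ∑ j, ∑ i, ((M * V) i j) ^ 2 ≤ ∑ _j : Fin r, c ^ 2 :=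
        Finset.sum_le_sum (fun j _ => hcol j)
    _ = (r : ℝ) * c ^ 2 := by
        rw [Finset.sum_const, Finset.card_univ, Fintype.card_fin, nsmul_eq_mul]

set_option maxHeartbeats 2000000

theorem stmt_12 {m n k : ℕ} (hk : 0 < k) (ε : ℝ) (hε : 0 < ε)
    (A Ak : Matrix (Fin m) (Fin n) ℝ)
    (Uk : Matrix (Fin m) (Fin k) ℝ) (Vk : Matrix (Fin n) (Fin k) ℝ)
    (hUk : Ukᵀ * Uk = 1) (hVk : Vkᵀ * Vk = 1)
    (hAkU : Ak = Uk * Ukᵀ * A) (hAkV : Ak = A * (Vk * Vkᵀ))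
    (hbest : ∀ B : Matrix (Fin m) (Fin n) ℝ, B.rank ≤ k → frob (A - Ak) ≤ frob (A - B))
    (P : Matrix (Fin m) (Fin m) ℝ) (Q : Matrix (Fin n) (Fin n) ℝ)
    (hP : P * P = P ∧ Pᵀ = P) (hQ : Q * Q = Q ∧ Qᵀ = Q)
    (hPSF : spec ((1 - P) * A) ^ 2 ≤ (ε / (k : ℝ)) * frob (A - Ak) ^ 2)
    (hQSF : spec (A * (1 - Q)) ^ 2 ≤ (ε / (k : ℝ)) * frob (A - Ak) ^ 2) :
    frob (A - P * Ak * Q) ^ 2 ≤ (1 + 4 * ε) * frob (A - Ak) ^ 2 := by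
  obtain ⟨hP1, hP2⟩ := hP
  obtain ⟨hQ1, hQ2⟩ := hQ
  have hfrob_sq : ∀ {m' n' : ℕ} (M : Matrix (Fin m') (Fin n') ℝ), frob M ^ 2 = ip M M := by
    intro m' n' M
    rw [frob, Real.sq_sqrt (by positivity), ip]
    exact Finset.sum_congr rfl fun i _ => Finset.sum_congr rfl fun j _ => pow_two _
  set δ := frob (A - Ak) ^ 2 with hδdef
  have hδ0 : 0 ≤ δ := sq_nonneg _
  have hkne : (k : ℝ) ≠ 0 := Nat.cast_ne_zero.mpr hk.ne'
  have hk0 : (0 : ℝ) < (k : ℝ) := Nat.cast_pos.mpr hk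
  -- abbreviations (plain defs via notation)
  have key : ∀ {r : ℕ} (W : Matrix (Fin k) (Fin r) ℝ), Ukᵀ * (Uk * W) = W := by
    intro r W; rw [← Matrix.mul_assoc, hUk, Matrix.one_mul]
  have keyV : ∀ {r : ℕ} (W : Matrix (Fin k) (Fin r) ℝ), Vkᵀ * (Vk * W) = W := by
    intro r W; rw [← Matrix.mul_assoc, hVk, Matrix.one_mul]
  -- I1 : (A - Ak) * (Vk * Vkᵀ) = 0
  have I1 : (A - Ak) * (Vk * Vkᵀ) = 0 := by
    rw [hAkV, Matrix.sub_mul, Matrix.mul_assoc, Matrix.mul_assoc, keyV, sub_self]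
  -- I2 : Akᵀ * (A - Ak) = 0
  have I2 : Akᵀ * (A - Ak) = 0 := by
    rw [hAkU, Matrix.mul_sub]
    rw [show (Uk * Ukᵀ * A)ᵀ = Aᵀ * Uk * Ukᵀ from by
      rw [Matrix.transpose_mul, Matrix.transpose_mul, Matrix.transpose_transpose,
        Matrix.mul_assoc]]
    rw [show Aᵀ * Uk * Ukᵀ * (Uk * Ukᵀ * A) = Aᵀ * Uk * Ukᵀ * A from by
      rw [Matrix.mul_assoc (Aᵀ * Uk) Ukᵀ _, Matrix.mul_assoc Uk Ukᵀ A, key,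
        ← Matrix.mul_assoc]]
    rw [Matrix.mul_assoc (Aᵀ * Uk) Ukᵀ A, sub_self]
  -- I3 : P * (Ak - P * Ak) = 0
  have I3 : P * (Ak - P * Ak) = 0 := by
    rw [Matrix.mul_sub, ← Matrix.mul_assoc, hP1, sub_self]
  -- I4 : (Ak - Ak * Q) * Q = 0
  have I4 : (Ak - Ak * Q) * Q = 0 := by
    rw [Matrix.sub_mul, Matrix.mul_assoc, hQ1, sub_self]
  -- I5 : Z * Q = 0
  have I5 : ((Ak - Ak * Q) - P * (Ak - Ak * Q)) * Q = 0 := by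
    rw [Matrix.sub_mul, I4, Matrix.mul_assoc, I4, Matrix.mul_zero, sub_self]
  -- I6 : Ak - P * Ak = (A - P * A) * (Vk * Vkᵀ)
  have I6 : Ak - P * Ak = (A - P * A) * (Vk * Vkᵀ) := by
    rw [hAkV, Matrix.sub_mul, Matrix.mul_assoc]
  -- I7 : Ak - Ak * Q = Uk * (Ukᵀ * (A - A * Q))
  have I7 : Ak - Ak * Q = Uk * (Ukᵀ * (A - A * Q)) := by
    rw [hAkU]; simp [Matrix.mul_sub, Matrix.mul_assoc]
  -- I8 : decomposition of the target matrix
  have I8 : A - P * Ak * Q = (A - Ak) + (Ak - P * Ak) + P * (Ak - Ak * Q) := by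
    rw [Matrix.mul_sub, ← Matrix.mul_assoc]
    abel
  -- J1 : ip (A-Ak) (Ak - P*Ak) = 0
  have hVsym : (Vk * Vkᵀ)ᵀ = Vk * Vkᵀ := by
    rw [Matrix.transpose_mul, Matrix.transpose_transpose]
  have J1 : ip (A - Ak) (Ak - P * Ak) = 0 := by
    rw [I6, ipR', hVsym, I1, ip_zero_left]
  -- J2 : ∀ M, ip (Ak * M) (A - Ak) = 0
  have J2 : ∀ (M : Matrix (Fin n) (Fin n) ℝ), ip (Ak * M) (A - Ak) = 0 := by
    intro M; rw [ipL, I2, ip_zero_right]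
  -- J3 : ip (A - Ak) Ak = 0
  have J3 : ip (A - Ak) Ak = 0 := by
    rw [ip_comm]; have := J2 1; rwa [Matrix.mul_one] at this
  -- J4 : ip (A - Ak) (Ak - Ak * Q) = 0
  have J4 : ip (A - Ak) (Ak - Ak * Q) = 0 := by
    rw [ip_sub_right, J3, ip_comm (A - Ak) (Ak * Q), J2, sub_self]
  -- J5 : ∀ M N, ip (P * M) (N - P * N) = 0
  have J5 : ∀ (M N : Matrix (Fin m) (Fin n) ℝ), ip (P * M) (N - P * N) = 0 := by
    intro M N
    rw [ipL, hP2, Matrix.mul_sub, ← Matrix.mul_assoc, hP1, sub_self, ip_zero_right]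
  -- notation shortcuts
  -- G := Ak - Ak*Q ; Z := G - P*G ; Y := P*G ; B := A - A*Q ; X := Ak - P*Ak ; E := A - Ak
  have hGdec : (Ak - Ak * Q) = P * (Ak - Ak * Q) + ((Ak - Ak * Q) - P * (Ak - Ak * Q)) := by
    abel
  -- J6 : ip G Z = ip Z Z
  have J6 : ip (Ak - Ak * Q) ((Ak - Ak * Q) - P * (Ak - Ak * Q)) = 
      ip ((Ak - Ak * Q) - P * (Ak - Ak * Q)) ((Ak - Ak * Q) - P * (Ak - Ak * Q)) := by
    nth_rewrite 1 [hGdec]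
    rw [ip_add_left, J5, zero_add]
  -- J7 : ip Ak Z = ip G Z
  have J7 : ip Ak ((Ak - Ak * Q) - P * (Ak - Ak * Q)) =
      ip (Ak - Ak * Q) ((Ak - Ak * Q) - P * (Ak - Ak * Q)) := by
    rw [ip_sub_left, ipR, hQ2, I5, ip_zero_right, sub_zero]
  -- J8 : ip A Z = ip B Z
  have J8 : ip A ((Ak - Ak * Q) - P * (Ak - Ak * Q)) =
      ip (A - A * Q) ((Ak - Ak * Q) - P * (Ak - Ak * Q)) := by
    rw [ip_sub_left, ipR, hQ2, I5, ip_zero_right, sub_zero]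
  -- J11/J12 : ip B G = ip T T = ip G G
  have J11 : ip (A - A * Q) (Ak - Ak * Q) = ip (Ukᵀ * (A - A * Q)) (Ukᵀ * (A - A * Q)) := by
    rw [I7, ipL']
  have J12 : ip (Ak - Ak * Q) (Ak - Ak * Q) = ip (Ukᵀ * (A - A * Q)) (Ukᵀ * (A - A * Q)) := by
    rw [I7, ipL, key]
  -- J14 : ip B (P * G) = ip S T
  have J14 : ip (A - A * Q) (P * (Ak - Ak * Q)) =
      ip (Ukᵀ * (P * (A - A * Q))) (Ukᵀ * (A - A * Q)) := by
    rw [I7, ipL', hP2, ipL']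
  -- cross X Y
  have JXY : ip (Ak - P * Ak) (P * (Ak - Ak * Q)) = 0 := by
    rw [ip_comm, ipL, hP2]
    rw [show P * (Ak - P * Ak) = 0 from I3, ip_zero_right]
  -- J13 : ip B Z = ip G G - ip B (P*G)
  have J13 : ip (A - A * Q) ((Ak - Ak * Q) - P * (Ak - Ak * Q)) =
      ip (Ak - Ak * Q) (Ak - Ak * Q) - ip (A - A * Q) (P * (Ak - Ak * Q)) := by
    rw [ip_sub_right, J11, J12]
  -- J15 : ip G G = ip Y Y + ip Z Z
  have J15 : ip (Ak - Ak * Q) (Ak - Ak * Q) =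
      ip (P * (Ak - Ak * Q)) (P * (Ak - Ak * Q)) +
        ip ((Ak - Ak * Q) - P * (Ak - Ak * Q)) ((Ak - Ak * Q) - P * (Ak - Ak * Q)) := by
    conv_lhs => rw [hGdec]
    rw [ip_expand, J5, mul_zero, add_zero]
  -- a1 : ip E G - ip E Z = ip E (P*G)
  have a1 : ip (A - Ak) (Ak - Ak * Q) -
      ip (A - Ak) ((Ak - Ak * Q) - P * (Ak - Ak * Q)) = ip (A - Ak) (P * (Ak - Ak * Q)) := by
    rw [← ip_sub_right]
    congr 1
    exact sub_sub_cancel _ _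
  -- a3 : ip E Z = ip A Z - ip Ak Z
  have a3 : ip (A - Ak) ((Ak - Ak * Q) - P * (Ak - Ak * Q)) =
      ip A ((Ak - Ak * Q) - P * (Ak - Ak * Q)) -
        ip Ak ((Ak - Ak * Q) - P * (Ak - Ak * Q)) := ip_sub_left _ _ _
  -- a6 : ip B Z = ip B G - ip B (P*G)  (this is J13 pre-rewrite; keep J13)
  -- expansion of the target
  have hDD : ip (A - P * Ak * Q) (A - P * Ak * Q) =
      ip (A - Ak) (A - Ak) + 2 * ip (A - Ak) (Ak - P * Ak) +
        ip (Ak - P * Ak) (Ak - P * Ak) +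
        2 * (ip (A - Ak) (P * (Ak - Ak * Q)) + ip (Ak - P * Ak) (P * (Ak - Ak * Q))) +
        ip (P * (Ak - Ak * Q)) (P * (Ak - Ak * Q)) := by
    rw [I8, ip_expand, ip_expand, ip_add_left]
  -- column norm facts
  have hVcol : ∀ j, ∑ i, (Vk i j) ^ 2 ≤ 1 := by
    intro j
    have h : ∑ i, (Vk i j) ^ 2 = (Vkᵀ * Vk) j j := by
      simp [Matrix.mul_apply, pow_two, Matrix.transpose_apply]
    rw [h, hVk]
    simp [Matrix.one_apply]
  have hUcol : ∀ j, ∑ i, (Uk i j) ^ 2 ≤ 1 := by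
    intro j
    have h : ∑ i, (Uk i j) ^ 2 = (Ukᵀ * Uk) j j := by
      simp [Matrix.mul_apply, pow_two, Matrix.transpose_apply]
    rw [h, hUk]
    simp [Matrix.one_apply]
  have hPUcol : ∀ j, ∑ i, ((P * Uk) i j) ^ 2 ≤ 1 := by
    intro j
    have hcol : ∑ i, ((P * Uk) i j) ^ 2 = vnorm (P *ᵥ fun l => Uk l j) ^ 2 := by
      rw [vnorm_sq]
      exact Finset.sum_congr rfl fun i _ => by
        simp [Matrix.mul_apply, Matrix.mulVec, dotProduct]
    have h1 : vnorm (P *ᵥ fun l => Uk l j) ≤ vnorm (fun l => Uk l j) :=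
      proj_mulVec_le P hP1 hP2 _
    have h2 : vnorm (fun l => Uk l j) ^ 2 ≤ 1 := by
      rw [vnorm_sq]; exact hUcol j
    rw [hcol]
    nlinarith [vnorm_nonneg (P *ᵥ fun l => Uk l j), vnorm_nonneg (fun l => Uk l j)]
  -- bound on ip X X
  have hX2 : ip (Ak - P * Ak) (Ak - P * Ak) = ip ((A - P * A) * Vk) ((A - P * A) * Vk) := by
    rw [I6, ← Matrix.mul_assoc, ipR, Matrix.transpose_transpose,
      Matrix.mul_assoc ((A - P * A) * Vk) Vkᵀ Vk, hVk, Matrix.mul_one]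
  have hspecP : spec (A - P * A) ^ 2 ≤ ε / (k : ℝ) * δ := by
    rw [show A - P * A = (1 - P) * A from by rw [Matrix.sub_mul, Matrix.one_mul]]
    exact hPSF
  have bX : ip (Ak - P * Ak) (Ak - P * Ak) ≤ ε * δ := by
    rw [hX2]
    have h := colbound (A - P * A) Vk (spec (A - P * A)) (spec_nonneg _)
      (spec_mulVec_le _) hVcol
    calc ip ((A - P * A) * Vk) ((A - P * A) * Vk) ≤ (k : ℝ) * spec (A - P * A) ^ 2 := h
      _ ≤ (k : ℝ) * (ε / (k : ℝ) * δ) := by nlinarith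
      _ = ε * δ := by field_simp
  -- bounds on ip T T and ip S S
  have hspecQ : spec (A - A * Q) ^ 2 ≤ ε / (k : ℝ) * δ := by
    rw [show A - A * Q = A * (1 - Q) from by rw [Matrix.mul_sub, Matrix.mul_one]]
    exact hQSF
  have hTT : ip (Ukᵀ * (A - A * Q)) (Ukᵀ * (A - A * Q)) =
      ip ((A - A * Q)ᵀ * Uk) ((A - A * Q)ᵀ * Uk) := by
    conv_rhs => rw [← ip_transpose ((A - A * Q)ᵀ * Uk) ((A - A * Q)ᵀ * Uk)]
    rw [Matrix.transpose_mul, Matrix.transpose_transpose]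
  have bT : ip (Ukᵀ * (A - A * Q)) (Ukᵀ * (A - A * Q)) ≤ ε * δ := by
    rw [hTT]
    have h := colbound (A - A * Q)ᵀ Uk (spec (A - A * Q)) (spec_nonneg _)
      (spec_transpose_mulVec_le _) hUcol
    calc ip ((A - A * Q)ᵀ * Uk) ((A - A * Q)ᵀ * Uk) ≤ (k : ℝ) * spec (A - A * Q) ^ 2 := h
      _ ≤ (k : ℝ) * (ε / (k : ℝ) * δ) := by nlinarith
      _ = ε * δ := by field_simp
  have hSS : ip (Ukᵀ * (P * (A - A * Q))) (Ukᵀ * (P * (A - A * Q))) =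
      ip ((A - A * Q)ᵀ * (P * Uk)) ((A - A * Q)ᵀ * (P * Uk)) := by
    conv_rhs => rw [← ip_transpose ((A - A * Q)ᵀ * (P * Uk)) ((A - A * Q)ᵀ * (P * Uk))]
    rw [Matrix.transpose_mul, Matrix.transpose_mul, Matrix.transpose_transpose, hP2,
      Matrix.mul_assoc]
  have bS : ip (Ukᵀ * (P * (A - A * Q))) (Ukᵀ * (P * (A - A * Q))) ≤ ε * δ := by
    rw [hSS]
    have h := colbound (A - A * Q)ᵀ (P * Uk) (spec (A - A * Q)) (spec_nonneg _)
      (spec_transpose_mulVec_le _) hPUcol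
    calc ip ((A - A * Q)ᵀ * (P * Uk)) ((A - A * Q)ᵀ * (P * Uk)) ≤
        (k : ℝ) * spec (A - A * Q) ^ 2 := h
      _ ≤ (k : ℝ) * (ε / (k : ℝ) * δ) := by nlinarith
      _ = ε * δ := by field_simp
  -- Cauchy-Schwarz bound
  have bST : ip (Ukᵀ * (P * (A - A * Q))) (Ukᵀ * (A - A * Q)) ≤ ε * δ := by
    have hεδ : (0 : ℝ) ≤ ε * δ := by positivity
    calc ip (Ukᵀ * (P * (A - A * Q))) (Ukᵀ * (A - A * Q)) ≤
        Real.sqrt (ip (Ukᵀ * (P * (A - A * Q))) (Ukᵀ * (P * (A - A * Q)))) *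
          Real.sqrt (ip (Ukᵀ * (A - A * Q)) (Ukᵀ * (A - A * Q))) := ip_cauchy _ _
      _ ≤ Real.sqrt (ε * δ) * Real.sqrt (ε * δ) :=
          mul_le_mul (Real.sqrt_le_sqrt bS) (Real.sqrt_le_sqrt bT) (Real.sqrt_nonneg _)
            (Real.sqrt_nonneg _)
      _ = ε * δ := Real.mul_self_sqrt hεδ
  -- final assembly
  have hδE : δ = ip (A - Ak) (A - Ak) := by rw [hδdef, hfrob_sq]
  have hYnn : 0 ≤ ip (P * (Ak - Ak * Q)) (P * (Ak - Ak * Q)) := ip_nonneg _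
  have hεδ0 : (0 : ℝ) ≤ ε * δ := by positivity
  rw [hfrob_sq]
  linarith [hDD, J1, JXY, J4, a1, a3, J7.trans J6, J8, J13, J14, J15, bX, bST, hδE, hYnn, hδ0,
    hεδ0]
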